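/- Let S_n be the sum of the Sackin index over all binary tree shapes with n leaves. Then S_1 = 0 and for n > 1, S_n = n·b_n + Σ_{1 ≤ k < n} S_k·b_{n−k} + [n even]·S_{n/2}, where b_m is the number of tree shapes with m leaves. -/

import Mathlib

/-- Full binary rooted trees with leaves carrying data of type `α`. -/
inductive BTree (α : Type) : Type
  | leaf (a : α) : BTree α
  | node (l r : BTree α) : BTree α

namespace BTree

/-- Number of leaves below (the subtree rooted at) a node. -/
def leaves {α} : BTree α → ℕ
  | leaf _ => 1
  | node l r => leaves l + leaves r

/-- Sackin index: sum over internal nodes of the number of leaves below that node. -/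
def sackin {α} : BTree α → ℕ
  | leaf _ => 0
  | node l r => (leaves l + leaves r) + sackin l + sackin r

/-- Colless index: sum over internal nodes of the absolute difference of leaf counts
of the two children. -/
def colless {α} : BTree α → ℕ
  | leaf _ => 0
  | node l r => ((leaves l : ℤ) - (leaves r : ℤ)).natAbs + colless l + colless r

/-- Sum over all leaves of their depth (number of edges from the root). -/
def depthSum {α} : BTree α → ℕ
  | leaf _ => 0
  | node l r => (depthSum l + leaves l) + (depthSum r + leaves r)

/-- Sum of leaf counts `ℓ_T(u)` over all nodes `u` (including leaves, each counting 1). -/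
def totalL {α} : BTree α → ℕ
  | leaf _ => 1
  | node l r => (leaves l + leaves r) + totalL l + totalL r

/-- Sum over internal nodes of the minimum of the leaf counts of the two children. -/
def minSum {α} : BTree α → ℕ
  | leaf _ => 0
  | node l r => min (leaves l) (leaves r) + minSum l + minSum r

/-- Number of edges strictly below a node (each node of the subtree other than
its root contributes the edge to its parent). -/
def edgesBelow {α} : BTree α → ℕ
  | leaf _ => 0
  | node l r => 2 + edgesBelow l + edgesBelow r

/-- Number of internal (non-leaf) nodes. -/
def internals {α} : BTree α → ℕ
  | leaf _ => 0
  | node l r => 1 + internals l + internals r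

/-- `Subtree s t` means the subtree `s` occurs in `t`; thus `Subtree (node v w) T`
expresses that `T` has an internal node whose two child subtrees are `v` and `w`. -/
inductive Subtree {α} : BTree α → BTree α → Prop
  | refl (t) : Subtree t t
  | left {s l r} : Subtree s l → Subtree s (node l r)
  | right {s l r} : Subtree s r → Subtree s (node l r)

/-- Generating relation of tree-shape isomorphism: swapping the two children of a node. -/
inductive Rel {α} : BTree α → BTree α → Prop
  | swap (l r) : Rel (node l r) (node r l)
  | congrL {l l'} (r) : Rel l l' → Rel (node l r) (node l' r)
  | congrR (l) {r r'} : Rel r r' → Rel (node l r) (node l r')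

/-- The list of leaf labels, left to right. -/
def leafList {α} : BTree α → List α
  | leaf a => [a]
  | node l r => leafList l ++ leafList r

end BTree

/-- Binary tree shapes: full binary rooted trees up to isomorphism (children unordered). -/
def Shape : Type := Quot (@BTree.Rel Unit)

noncomputable def Shape.leaves (q : Shape) : ℕ := BTree.leaves q.out
noncomputable def Shape.sackin (q : Shape) : ℕ := BTree.sackin q.out
noncomputable def Shape.colless (q : Shape) : ℕ := BTree.colless q.out

/-- `bSh n` = number of binary tree shapes with `n` leaves. -/
noncomputable def bSh (n : ℕ) : ℕ := Set.ncard {q : Shape | q.leaves = n}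

/-- `S_n`: total Sackin index over all tree shapes with `n` leaves. -/
noncomputable def Snum (n : ℕ) : ℕ := ∑ᶠ q ∈ {q : Shape | q.leaves = n}, Shape.sackin q

/-- `D_n = (1/2) Σ_{T ∈ 𝒯(n)} (S(T) - C(T))`. -/
noncomputable def Dnum (n : ℕ) : ℕ :=
  (∑ᶠ q ∈ {q : Shape | q.leaves = n}, (Shape.sackin q - Shape.colless q)) / 2

/-- Phylogenetic trees as labelled full binary rooted trees up to isomorphism. -/
def PTree : Type := Quot (@BTree.Rel ℕ)

/-- A labelled tree is a phylogenetic tree on `n` taxa if its leaf labels are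
exactly `{1, ..., n}`, each occurring once. -/
def BTree.isPhylo (n : ℕ) (t : BTree ℕ) : Prop :=
  (BTree.leafList t).Perm ((List.range n).map (· + 1))

/-- The set `𝒫(n)` of phylogenetic trees on `n` taxa. -/
noncomputable def PhyloSet (n : ℕ) : Set PTree := {q | BTree.isPhylo n q.out}

/-- `a_n = |𝒫(n)|`. -/
noncomputable def aP (n : ℕ) : ℕ := Set.ncard (PhyloSet n)

/-- Total Sackin index over all phylogenetic trees on `n` taxa. -/
noncomputable def SpTotal (n : ℕ) : ℕ := ∑ᶠ q ∈ PhyloSet n, BTree.sackin (Quot.out q)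

/-- All trees obtained from `t` by attaching a new leaf labelled `x` on each of the
`2·leaves t - 1` edges of `t` (including the open edge entering the root). -/
def BTree.attach (x : ℕ) : BTree ℕ → List (BTree ℕ)
  | .leaf a => [.node (.leaf a) (.leaf x)]
  | .node l r =>
      .node (.node l r) (.leaf x) ::
        ((BTree.attach x l).map (fun l' => .node l' r) ++
         (BTree.attach x r).map (fun r' => .node l r'))

/- ===== Auxiliary development for stmt_8 ===== -/

deriving instance DecidableEq for BTree

namespace SackinAux

open BTree


/-- An injective code of trees into ℕ. -/
def code : BTree Unit → ℕ
  | .leaf _ => 0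
  | .node l r => Nat.pair (code l) (code r) + 1

lemma code_inj : ∀ (t s : BTree Unit), code t = code s → t = s
  | .leaf a, .leaf b, _ => by cases a; cases b; rfl
  | .leaf _, .node _ _, h => by simp [code] at h
  | .node _ _, .leaf _, h => by simp [code] at h
  | .node l r, .node l' r', h => by
      simp only [code, Nat.add_right_cancel_iff, Nat.pair_eq_pair] at h
      rw [code_inj l l' h.1, code_inj r r' h.2]

/-- Canonical form: sort children by code. -/
def norm : BTree Unit → BTree Unit
  | .leaf a => .leaf a
  | .node l r =>
      if code (norm l) ≤ code (norm r) then .node (norm l) (norm r)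
      else .node (norm r) (norm l)

lemma leaves_pos {α : Type} (t : BTree α) : 0 < leaves t := by
  induction t with
  | leaf a => simp [leaves]
  | node l r ihl ihr => simp only [leaves]; omega

lemma leaves_norm (t : BTree Unit) : leaves (norm t) = leaves t := by
  induction t with
  | leaf a => rfl
  | node l r ihl ihr =>
      rw [norm]; split <;> simp only [leaves, ihl, ihr] <;> omega

lemma sackin_norm (t : BTree Unit) : sackin (norm t) = sackin t := by
  induction t with
  | leaf a => rfl
  | node l r ihl ihr =>
      rw [norm]; split <;>
        simp only [sackin, ihl, ihr, leaves_norm] <;> omega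

lemma norm_idem (t : BTree Unit) : norm (norm t) = norm t := by
  induction t with
  | leaf a => rfl
  | node l r ihl ihr =>
      rw [norm]
      by_cases h : code (norm l) ≤ code (norm r)
      · rw [if_pos h, norm, ihl, ihr, if_pos h]
      · rw [if_neg h, norm, ihl, ihr, if_pos (Nat.le_of_not_le h)]

lemma norm_rel {t s : BTree Unit} (h : Rel t s) : norm t = norm s := by
  induction h with
  | swap l r =>
      rw [norm, norm]
      by_cases h1 : code (norm l) ≤ code (norm r)
      · by_cases h2 : code (norm r) ≤ code (norm l)
        · rw [if_pos h1, if_pos h2, code_inj _ _ (Nat.le_antisymm h2 h1)]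
        · rw [if_pos h1, if_neg h2]
      · rw [if_neg h1, if_pos (Nat.le_of_not_le h1)]
  | congrL r h ih => rw [norm, norm, ih]
  | congrR l h ih => rw [norm, norm, ih]

lemma norm_eqv {t s : BTree Unit} (h : Relation.EqvGen Rel t s) : norm t = norm s := by
  induction h with
  | rel a b h => exact norm_rel h
  | refl a => rfl
  | symm a b h ih => exact ih.symm
  | trans a b c h1 h2 ih1 ih2 => exact ih1.trans ih2

lemma eqv_node_left {l l' : BTree Unit} (r : BTree Unit)
    (h : Relation.EqvGen Rel l l') :
    Relation.EqvGen Rel (node l r) (node l' r) := by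
  induction h with
  | rel a b h => exact .rel _ _ (.congrL r h)
  | refl a => exact .refl _
  | symm a b h ih => exact .symm _ _ ih
  | trans a b c h1 h2 ih1 ih2 => exact .trans _ _ _ ih1 ih2

lemma eqv_node_right (l : BTree Unit) {r r' : BTree Unit}
    (h : Relation.EqvGen Rel r r') :
    Relation.EqvGen Rel (node l r) (node l r') := by
  induction h with
  | rel a b h => exact .rel _ _ (.congrR l h)
  | refl a => exact .refl _
  | symm a b h ih => exact .symm _ _ ih
  | trans a b c h1 h2 ih1 ih2 => exact .trans _ _ _ ih1 ih2

lemma eqv_norm (t : BTree Unit) : Relation.EqvGen Rel t (norm t) := by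
  induction t with
  | leaf a => exact .refl _
  | node l r ihl ihr =>
      have h1 : Relation.EqvGen Rel (node l r) (node (norm l) (norm r)) :=
        .trans _ _ _ (eqv_node_left r ihl) (eqv_node_right (norm l) ihr)
      rw [norm]; split
      · exact h1
      · exact .trans _ _ _ h1 (.rel _ _ (.swap _ _))

lemma leaves_rel {t s : BTree Unit} (h : Rel t s) : leaves t = leaves s := by
  induction h with
  | swap l r => simp only [leaves]; omega
  | congrL r h ih => simp only [leaves, ih]
  | congrR l h ih => simp only [leaves, ih]

lemma sackin_rel {t s : BTree Unit} (h : Rel t s) : sackin t = sackin s := by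
  induction h with
  | swap l r => simp only [sackin]; omega
  | congrL r h ih => simp only [sackin, leaves_rel h, ih]
  | congrR l h ih => simp only [sackin, leaves_rel h, ih]

lemma leaves_eqv {t s : BTree Unit} (h : Relation.EqvGen Rel t s) :
    leaves t = leaves s := by
  induction h with
  | rel a b h => exact leaves_rel h
  | refl a => rfl
  | symm a b h ih => exact ih.symm
  | trans a b c h1 h2 ih1 ih2 => exact ih1.trans ih2

lemma sackin_eqv {t s : BTree Unit} (h : Relation.EqvGen Rel t s) :
    sackin t = sackin s := by
  induction h with
  | rel a b h => exact sackin_rel h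
  | refl a => rfl
  | symm a b h ih => exact ih.symm
  | trans a b c h1 h2 ih1 ih2 => exact ih1.trans ih2

lemma out_mk_eqv (t : BTree Unit) :
    Relation.EqvGen Rel (Quot.out (Quot.mk Rel t)) t :=
  Quot.eq.mp (Quot.out_eq _)

lemma shape_leaves_mk (t : BTree Unit) :
    Shape.leaves (Quot.mk Rel t) = leaves t :=
  leaves_eqv (out_mk_eqv t)

lemma shape_sackin_mk (t : BTree Unit) :
    Shape.sackin (Quot.mk Rel t) = sackin t :=
  sackin_eqv (out_mk_eqv t)

/-- The finset of all trees with `n` leaves. -/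
def TL : ℕ → Finset (BTree Unit)
  | 0 => ∅
  | 1 => {.leaf ()}
  | (n+2) => (Finset.Ico 1 (n+2)).attach.biUnion
      (fun k => ((TL k.1) ×ˢ (TL (n+2-k.1))).image (fun p => .node p.1 p.2))
  decreasing_by
    · have := Finset.mem_Ico.mp k.2; omega
    · have := Finset.mem_Ico.mp k.2; omega

lemma mem_TL : ∀ (n : ℕ) (t : BTree Unit), t ∈ TL n ↔ leaves t = n := by
  intro n
  induction n using Nat.strong_induction_on with
  | _ n ih =>
    intro t
    match n with
    | 0 =>
      simp only [TL, Finset.notMem_empty, false_iff]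
      have := leaves_pos t; omega
    | 1 =>
      constructor
      · intro h; simp only [TL, Finset.mem_singleton] at h; subst h; rfl
      · intro h
        match t with
        | .leaf a => cases a; simp [TL]
        | .node l r =>
            have := leaves_pos l; have := leaves_pos r
            simp only [leaves] at h; omega
    | (m+2) =>
      constructor
      · intro h
        rw [TL] at h
        simp only [Finset.mem_biUnion, Finset.mem_attach, Finset.mem_image,
          Finset.mem_product, true_and] at h
        obtain ⟨k, ⟨a, b⟩, ⟨ha, hb⟩, rfl⟩ := h
        have hk := Finset.mem_Ico.mp k.2
        have h1 : leaves a = k.1 := (ih k.1 (by omega) a).mp ha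
        have h2 : leaves b = m+2-k.1 := (ih (m+2-k.1) (by omega) b).mp hb
        simp only [leaves, h1, h2]; omega
      · intro h
        match t with
        | .leaf a => simp only [leaves] at h; omega
        | .node a b =>
            have hpa := leaves_pos a; have hpb := leaves_pos b
            simp only [leaves] at h
            rw [TL]
            refine Finset.mem_biUnion.mpr
              ⟨⟨leaves a, Finset.mem_Ico.mpr ⟨hpa, by omega⟩⟩, Finset.mem_attach _ _, ?_⟩
            refine Finset.mem_image.mpr ⟨(a, b), Finset.mem_product.mpr ⟨?_, ?_⟩, rfl⟩
            · exact (ih (leaves a) (by omega) a).mpr rfl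
            · exact (ih (m+2-leaves a) (by omega) b).mpr (by omega)

/-- Canonical trees with `n` leaves. -/
def C (n : ℕ) : Finset (BTree Unit) := (TL n).filter (fun t => norm t = t)

lemma mem_C {n : ℕ} {t : BTree Unit} :
    t ∈ C n ↔ norm t = t ∧ leaves t = n := by
  rw [C, Finset.mem_filter, mem_TL]; tauto

lemma mk_injOn_C {n : ℕ} : Set.InjOn (Quot.mk Rel) ((C n : Finset (BTree Unit)) : Set (BTree Unit)) := by
  intro a ha b hb h
  have := norm_eqv (Quot.eq.mp h)
  rwa [(mem_C.mp ha).1, (mem_C.mp hb).1] at this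

lemma shapes_eq (n : ℕ) :
    {q : Shape | q.leaves = n} = (Quot.mk Rel) '' ↑(C n) := by
  ext q
  show q.leaves = n ↔ ∃ t, t ∈ (C n : Set (BTree Unit)) ∧ Quot.mk Rel t = (q : Quot (@Rel Unit))
  simp only [Set.mem_setOf_eq, Set.mem_image, Finset.mem_coe, mem_C]
  constructor
  · intro h
    refine ⟨norm (Quot.out q), ⟨norm_idem _, ?_⟩, ?_⟩
    · rw [leaves_norm]; exact h
    · exact (Quot.eqvGen_sound (Relation.EqvGen.symm _ _ (eqv_norm _))).trans (Quot.out_eq q)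
  · rintro ⟨t, ⟨hn, hl⟩, rfl⟩
    show Shape.leaves (Quot.mk Rel t) = n
    rw [shape_leaves_mk]; exact hl

lemma Snum_eq (n : ℕ) : Snum n = ∑ t ∈ C n, sackin t := by
  rw [Snum, shapes_eq]
  exact (finsum_mem_image mk_injOn_C).trans
    ((finsum_mem_congr rfl (fun t _ => shape_sackin_mk t)).trans
      (finsum_mem_coe_finset _ _))

lemma bSh_eq (n : ℕ) : bSh n = (C n).card := by
  rw [bSh, shapes_eq]
  exact (Set.ncard_image_of_injOn mk_injOn_C).trans (Set.ncard_coe_finset _)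

/- ===== The counting argument ===== -/

/-- All ordered pairs of canonical trees whose leaf counts sum to `n`. -/
def Q (n : ℕ) : Finset (BTree Unit × BTree Unit) :=
  (Finset.Ico 1 n).biUnion (fun k => (C k) ×ˢ (C (n-k)))

lemma mem_Q {n : ℕ} {p : BTree Unit × BTree Unit} :
    p ∈ Q n ↔ norm p.1 = p.1 ∧ norm p.2 = p.2 ∧ leaves p.1 + leaves p.2 = n := by
  simp only [Q, Finset.mem_biUnion, Finset.mem_Ico, Finset.mem_product, mem_C]
  constructor
  · rintro ⟨k, ⟨h1, h2⟩, ⟨hn1, hl1⟩, hn2, hl2⟩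
    exact ⟨hn1, hn2, by omega⟩
  · rintro ⟨hn1, hn2, hsum⟩
    have h1 := leaves_pos p.1
    have h2 := leaves_pos p.2
    exact ⟨leaves p.1, ⟨by omega, by omega⟩, ⟨hn1, rfl⟩, hn2, by omega⟩

/-- Sorted pairs of canonical trees. -/
def P (n : ℕ) : Finset (BTree Unit × BTree Unit) :=
  (Q n).filter (fun p => code p.1 ≤ code p.2)

/-- Diagonal pairs. -/
def E (n : ℕ) : Finset (BTree Unit × BTree Unit) :=
  (Q n).filter (fun p => p.1 = p.2)

lemma node_injective :
    Function.Injective (fun p : BTree Unit × BTree Unit => node p.1 p.2) := by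
  rintro ⟨a, b⟩ ⟨c, d⟩ h
  simp only [node.injEq] at h
  exact Prod.ext h.1 h.2

lemma image_P (n : ℕ) (hn : 1 < n) :
    (P n).image (fun p => node p.1 p.2) = C n := by
  ext t
  simp only [Finset.mem_image, P, Finset.mem_filter, mem_Q, mem_C]
  constructor
  · rintro ⟨⟨a, b⟩, ⟨⟨hn1, hn2, hsum⟩, hcode⟩, rfl⟩
    refine ⟨?_, hsum⟩
    simp only at hn1 hn2 hcode
    rw [norm, hn1, hn2, if_pos hcode]
  · rintro ⟨hnorm, hl⟩
    match t with
    | .leaf a => simp only [leaves] at hl; omega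
    | .node a b =>
      simp only [leaves] at hl
      rw [norm] at hnorm
      by_cases h : code (norm a) ≤ code (norm b)
      · rw [if_pos h] at hnorm
        have h1 : norm a = a := by injection hnorm
        have h2 : norm b = b := by injection hnorm with e1 e2
        refine ⟨(a, b), ⟨⟨h1, h2, hl⟩, ?_⟩, rfl⟩
        rw [← h1, ← h2]; exact h
      · rw [if_neg h] at hnorm
        exfalso
        have h1 : norm b = a := by injection hnorm
        have h2 : norm a = b := by injection hnorm with e1 e2
        have e : norm a = norm b := by rw [← h1, norm_idem]
        exact h (by rw [e])

lemma sum_product_add (A B : Finset (BTree Unit)) :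
    ∑ p ∈ A ×ˢ B, (sackin p.1 + sackin p.2)
      = (∑ a ∈ A, sackin a) * B.card + A.card * (∑ b ∈ B, sackin b) := by
  rw [Finset.sum_product]
  simp only [Finset.sum_add_distrib, Finset.sum_const, smul_eq_mul, ← Finset.mul_sum,
    ← Finset.sum_mul]
  ring

lemma sum_Q (n : ℕ) :
    ∑ p ∈ Q n, (sackin p.1 + sackin p.2)
      = ∑ k ∈ Finset.Ico 1 n,
          ((∑ t ∈ C k, sackin t) * (C (n-k)).card
            + (C k).card * (∑ t ∈ C (n-k), sackin t)) := by
  rw [Q, Finset.sum_biUnion ?hd]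
  · exact Finset.sum_congr rfl fun k _ => sum_product_add _ _
  case hd =>
    intro i _ j _ hij
    simp only [Function.onFun]
    refine Finset.disjoint_left.mpr fun p hpi hpj => hij ?_
    have h1 := (mem_C.mp (Finset.mem_product.mp hpi).1).2
    have h2 := (mem_C.mp (Finset.mem_product.mp hpj).1).2
    omega

lemma sum_reflect (n : ℕ) :
    ∑ k ∈ Finset.Ico 1 n, (C k).card * (∑ t ∈ C (n-k), sackin t)
      = ∑ k ∈ Finset.Ico 1 n, (∑ t ∈ C k, sackin t) * (C (n-k)).card := by
  refine Finset.sum_nbij' (fun k => n - k) (fun k => n - k) ?_ ?_ ?_ ?_ ?_ <;>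
    intro a ha <;> have := Finset.mem_Ico.mp ha
  · exact Finset.mem_Ico.mpr ⟨by omega, by omega⟩
  · exact Finset.mem_Ico.mpr ⟨by omega, by omega⟩
  · omega
  · omega
  · have h : n - (n - a) = a := by omega
    rw [h, Nat.mul_comm]

lemma sum_E (n : ℕ) (hn : 1 < n) :
    ∑ p ∈ E n, (sackin p.1 + sackin p.2)
      = if Even n then 2 * ∑ t ∈ C (n/2), sackin t else 0 := by
  by_cases he : Even n
  · rw [if_pos he]
    obtain ⟨m, hm⟩ := he
    have hE : E n = (C (n/2)).image (fun t => (t, t)) := by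
      ext p
      simp only [E, Finset.mem_filter, mem_Q, Finset.mem_image, mem_C]
      constructor
      · rintro ⟨⟨hn1, _, hsum⟩, heq⟩
        rw [← heq] at hsum
        exact ⟨p.1, ⟨hn1, by omega⟩, Prod.ext rfl heq⟩
      · rintro ⟨t, ⟨hnt, hlt⟩, rfl⟩
        exact ⟨⟨hnt, hnt, by dsimp only; omega⟩, rfl⟩
    rw [hE, Finset.sum_image (fun a _ b _ h => by
      simpa using congrArg Prod.fst h)]
    simp only [two_mul, Finset.sum_add_distrib]
  · rw [if_neg he]
    have hE : E n = ∅ := by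
      refine Finset.eq_empty_of_forall_notMem fun p hp => ?_
      obtain ⟨hq, heq⟩ := Finset.mem_filter.mp hp
      obtain ⟨_, _, hsum⟩ := mem_Q.mp hq
      rw [← heq] at hsum
      exact he ⟨leaves p.1, by omega⟩
    rw [hE, Finset.sum_empty]

lemma sum_swap_eq (n : ℕ) :
    ∑ p ∈ (Q n).filter (fun p => code p.2 < code p.1), (sackin p.1 + sackin p.2)
      = ∑ p ∈ (Q n).filter (fun p => code p.1 < code p.2), (sackin p.1 + sackin p.2) := by
  refine Finset.sum_nbij' (fun p => (p.2, p.1)) (fun p => (p.2, p.1)) ?_ ?_ ?_ ?_ ?_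
  · intro p hp
    obtain ⟨hq, hlt⟩ := Finset.mem_filter.mp hp
    obtain ⟨h1, h2, h3⟩ := mem_Q.mp hq
    exact Finset.mem_filter.mpr ⟨mem_Q.mpr ⟨h2, h1, by dsimp only; omega⟩, hlt⟩
  · intro p hp
    obtain ⟨hq, hlt⟩ := Finset.mem_filter.mp hp
    obtain ⟨h1, h2, h3⟩ := mem_Q.mp hq
    exact Finset.mem_filter.mpr ⟨mem_Q.mpr ⟨h2, h1, by dsimp only; omega⟩, hlt⟩
  · intro p _; rfl
  · intro p _; rfl
  · intro p _; simp only; omega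

lemma two_sum_P (n : ℕ) :
    2 * ∑ p ∈ P n, (sackin p.1 + sackin p.2)
      = ∑ p ∈ Q n, (sackin p.1 + sackin p.2)
        + ∑ p ∈ E n, (sackin p.1 + sackin p.2) := by
  have h1 : ∑ p ∈ Q n, (sackin p.1 + sackin p.2)
      = ∑ p ∈ P n, (sackin p.1 + sackin p.2)
        + ∑ p ∈ (Q n).filter (fun p => code p.2 < code p.1), (sackin p.1 + sackin p.2) := by
    rw [P, ← Finset.sum_filter_add_sum_filter_not (Q n) (fun p => code p.1 ≤ code p.2)]
    congr 2
    exact Finset.filter_congr fun p _ => by omega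
  have h2 : ∑ p ∈ P n, (sackin p.1 + sackin p.2)
      = ∑ p ∈ (Q n).filter (fun p => code p.1 < code p.2), (sackin p.1 + sackin p.2)
        + ∑ p ∈ E n, (sackin p.1 + sackin p.2) := by
    rw [← Finset.sum_filter_add_sum_filter_not (P n) (fun p => code p.1 < code p.2)]
    congr 2
    · rw [P, Finset.filter_filter]
      exact Finset.filter_congr fun p _ => by omega
    · rw [P, Finset.filter_filter, E]
      refine Finset.filter_congr fun p _ => ?_
      constructor
      · rintro ⟨hle, hnlt⟩; exact code_inj _ _ (by omega)
      · rintro h; rw [h]; exact ⟨Nat.le_refl _, Nat.lt_irrefl _⟩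
  have h3 := sum_swap_eq n
  omega

lemma sackin_leaf_one {t : BTree Unit} (h : leaves t = 1) : sackin t = 0 := by
  match t with
  | .leaf a => rfl
  | .node a b =>
      have := leaves_pos a; have := leaves_pos b
      simp only [leaves] at h; omega

end SackinAux

/-- the recurrence for the total Sackin index over tree shapes. -/
theorem stmt_8 : Snum 1 = 0 ∧ ∀ n : ℕ, 1 < n →
    Snum n = n * bSh n + (∑ k ∈ Finset.Ico 1 n, Snum k * bSh (n - k)) +
      (if Even n then Snum (n / 2) else 0) := by
  open SackinAux BTree in
  constructor
  · rw [Snum_eq]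
    exact Finset.sum_eq_zero fun t ht => sackin_leaf_one (mem_C.mp ht).2
  · intro n hn
    have himg := image_P n hn
    have hP1 : Snum n = n * (P n).card + ∑ p ∈ P n, (sackin p.1 + sackin p.2) := by
      rw [Snum_eq, ← himg, Finset.sum_image (fun a _ b _ h => node_injective h)]
      have hcg : ∀ p ∈ P n, sackin (node p.1 p.2) = n + (sackin p.1 + sackin p.2) := by
        intro p hp
        have hq := (mem_Q.mp (Finset.mem_filter.mp hp).1).2.2
        simp only [sackin]; omega
      rw [Finset.sum_congr rfl hcg, Finset.sum_add_distrib, Finset.sum_const, smul_eq_mul, Nat.mul_comm]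
    have hcard : (P n).card = bSh n := by
      rw [bSh_eq, ← himg, Finset.card_image_of_injective _ node_injective]
    have key : 2 * ∑ p ∈ P n, (sackin p.1 + sackin p.2)
        = 2 * ((∑ k ∈ Finset.Ico 1 n, Snum k * bSh (n - k))
            + if Even n then Snum (n / 2) else 0) := by
      rw [two_sum_P, sum_Q, sum_E n hn, Finset.sum_add_distrib, sum_reflect]
      simp only [← Snum_eq, ← bSh_eq]
      split <;> ring
    have hPsum := Nat.eq_of_mul_eq_mul_left (by norm_num : 0 < 2) key
    rw [hP1, hcard, hPsum]
    ring
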